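/- arXiv:1906.11342 — 2 statements merged into one kernel-verified Lean document; each statement's English description precedes it below -/
import Mathlib

section
/- Let n ≥ 3 and k ≥ 1, and let (x, c, u) be a combinatorial degenerated magic polygon D(n,k). Then the root label satisfies c = (k²·(n−2)+k+2)/2. -/
/-- The labeling function of a combinatorial degenerated magic polygon `D(n,k)`:
the labels `x t p` of the points on the `k` polygons (root vertex excluded)
together with the root label `c`. -/
def degMagicLabels (n k : ℕ) (x : Fin k → Fin (k * (n - 2) + 1) → ℕ) (c : ℕ) :
    (Fin k × Fin (k * (n - 2) + 1)) ⊕ Unit → ℕ :=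
  Sum.elim (fun q => x q.1 q.2) (fun _ => c)

/-- `(x, c, u)` is a combinatorial degenerated magic polygon `D(n,k)`:
(1) the `k²(n−2)+k+1` labels are exactly `1, …, k²(n−2)+k+1`, each occurring once;
(2) every edge sum `∑_{j=0}^{k} x t (i·k + j)`, for an edge not adjacent to the
root (`0 ≤ i ≤ n−3`), equals `u`;
(3) for every position `p`, the sum `(∑ t, x t p) + c` along the segment joining
the root vertex to the boundary of the largest polygon equals `u`. -/
def IsDegMagicPolygon (n k : ℕ) (x : Fin k → Fin (k * (n - 2) + 1) → ℕ) (c u : ℕ) : Prop :=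
  Function.Injective (degMagicLabels n k x c) ∧
  Set.range (degMagicLabels n k x c) = Set.Icc 1 (k ^ 2 * (n - 2) + k + 1) ∧
  (∀ t : Fin k, ∀ i ∈ Finset.range (n - 2),
    ∑ j ∈ Finset.range (k + 1), x t (Fin.ofNat (k * (n - 2) + 1) (i * k + j : ℕ)) = u) ∧
  (∀ p : Fin (k * (n - 2) + 1), (∑ t : Fin k, x t p) + c = u)

theorem degMagicPolygon_rootLabel (n k : ℕ) (hn : 3 ≤ n) (hk : 1 ≤ k)
    (x : Fin k → Fin (k * (n - 2) + 1) → ℕ) (c u : ℕ)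
    (h : IsDegMagicPolygon n k x c u) :
    c = (k ^ 2 * (n - 2) + k + 2) / 2 := by
  obtain ⟨hinj, hrange, h2, h3⟩ := h
  set N := k ^ 2 * (n - 2) + k + 1 with hN
  -- Step A: total sum of labels
  have himg : Finset.image (degMagicLabels n k x c) Finset.univ = Finset.Icc 1 N := by
    ext a
    simp only [Finset.mem_image, Finset.mem_univ, true_and, Finset.mem_Icc]
    constructor
    · rintro ⟨q, hq⟩
      have h' : a ∈ Set.range (degMagicLabels n k x c) := ⟨q, hq⟩
      rw [hrange] at h'
      exact h'
    · intro ha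
      have h' : a ∈ Set.Icc 1 N := ha
      rw [← hrange] at h'
      exact h'
  have hsum : ∑ q, degMagicLabels n k x c q = ∑ a ∈ Finset.Icc 1 N, a := by
    rw [← himg, Finset.sum_image (fun a _ b _ hab => hinj hab)]
  have hsplit : ∑ q, degMagicLabels n k x c q =
      (∑ t, ∑ p : Fin (k * (n - 2) + 1), x t p) + c := by
    rw [Fintype.sum_sum_type]
    simp [degMagicLabels, Fintype.sum_prod_type]
  set S := ∑ t, ∑ p : Fin (k * (n - 2) + 1), x t p with hS
  set T := ∑ a ∈ Finset.Icc 1 N, a with hT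
  have hE1 : S + c = T := by rw [← hsum, hsplit]
  have hgauss : 2 * T = N * (N + 1) := by
    have hins : insert 0 (Finset.Icc 1 N) = Finset.range (N + 1) := by
      ext a; simp; omega
    have h0 : (0 : ℕ) ∉ Finset.Icc 1 N := by simp
    have hg := Finset.sum_range_id_mul_two (N + 1)
    rw [← hins, Finset.sum_insert h0] at hg
    simpa [hT, mul_comm] using hg
  -- Step B: edge i = 0 gives u = (k+1) * c
  have hedge0 : ∀ t, ∑ j ∈ Finset.range (k + 1),
      x t (Fin.ofNat (k * (n - 2) + 1) (j : ℕ)) = u := by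
    intro t
    have h' := h2 t 0 (by simp; omega)
    simpa using h'
  have hB : k * u + (k + 1) * c = (k + 1) * u := by
    have h1 : ∑ j ∈ Finset.range (k + 1),
        ((∑ t, x t (Fin.ofNat (k * (n - 2) + 1) (j : ℕ))) + c) = (k + 1) * u := by
      rw [Finset.sum_congr rfl (fun j _ => h3 _)]
      simp [mul_comm]
    rw [Finset.sum_add_distrib, Finset.sum_const, Finset.card_range] at h1
    rw [Finset.sum_comm] at h1
    rw [Finset.sum_congr rfl (fun t _ => hedge0 t)] at h1
    simpa [Finset.sum_const, mul_comm] using h1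
  -- Step C: summing condition (3) over all positions
  have hC : S + (k * (n - 2) + 1) * c = (k * (n - 2) + 1) * u := by
    have h1 : ∑ p : Fin (k * (n - 2) + 1), ((∑ t, x t p) + c) =
        ∑ _p : Fin (k * (n - 2) + 1), u :=
      Finset.sum_congr rfl (fun p _ => h3 p)
    rw [Finset.sum_add_distrib, Finset.sum_const, Finset.sum_const,
      Finset.card_univ, Fintype.card_fin, Finset.sum_comm] at h1
    simpa [hS, mul_comm] using h1
  -- combine
  have hu : u = (k + 1) * c := by
    have h' : k * u + (k + 1) * c = k * u + u := by rw [hB]; ring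
    omega
  have hScalc : S = (k * (n - 2) + 1) * k * c := by
    have h' : S + (k * (n - 2) + 1) * c =
        (k * (n - 2) + 1) * k * c + (k * (n - 2) + 1) * c := by
      rw [hC, hu]; ring
    omega
  have hTN : T = N * c := by
    have hPk : (k * (n - 2) + 1) * k + 1 = N := by rw [hN]; ring
    calc T = S + c := hE1.symm
    _ = ((k * (n - 2) + 1) * k + 1) * c := by rw [hScalc]; ring
    _ = N * c := by rw [hPk]
  have hNc : N * (2 * c) = N * (N + 1) := by
    rw [← hgauss, hTN]; ring
  have h2c : 2 * c = N + 1 := Nat.eq_of_mul_eq_mul_left (by positivity) hNc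
  have hfin : N + 1 = k ^ 2 * (n - 2) + k + 2 := by omega
  rw [← hfin, ← h2c]
  omega
end

section
/- For every integer n ≥ 3 there exists a combinatorial degenerated magic polygon D(n,2); that is, there exist labels x : Fin 2 → Fin (2(n−2)+1) → ℕ, a root label c, and a magic sum u satisfying the defining conditions. -/
/-- Row-0 labels of the degenerated magic polygon `D(n,2)` with `m = n - 2`. -/
def dmA (m p : ℕ) : ℕ :=
  if p % 2 = 1 then 3*m + 2 - p/2
  else if p % 4 = 0 then 3*m + 3 + p/4
  else p/4 + 1

lemma dmA_bounds (m : ℕ) (hm : 1 ≤ m) {p : ℕ} (hp : p ≤ 2*m) :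
    1 ≤ dmA m p ∧ dmA m p ≤ 4*m+3 ∧ dmA m p ≠ 2*m+2 := by
  unfold dmA; split_ifs <;> omega

lemma dmA_inj (m : ℕ) (hm : 1 ≤ m) {p q : ℕ} (hp : p ≤ 2*m) (hq : q ≤ 2*m) :
    (dmA m p = dmA m q → p = q) ∧ dmA m p + dmA m q ≠ 4*m+4 := by
  unfold dmA; split_ifs <;> omega

lemma dmA_triple (m : ℕ) {i : ℕ} (hi : i < m) :
    dmA m (i*2) + dmA m (i*2+1) + dmA m (i*2+2) = 6*m+6 := by
  unfold dmA; split_ifs <;> omega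

theorem degMagicPolygon_existence_two (n : ℕ) (hn : 3 ≤ n) :
    ∃ (x : Fin 2 → Fin (2 * (n - 2) + 1) → ℕ) (c u : ℕ),
      IsDegMagicPolygon n 2 x c u := by
  obtain ⟨m', rfl⟩ : ∃ m', n = m' + 3 := ⟨n - 3, by omega⟩
  set M : ℕ := m' + 1 with hM
  have hn2 : m' + 3 - 2 = M := rfl
  have hm : 1 ≤ M := Nat.le_add_left 1 m'
  set x : Fin 2 → Fin (2 * (m' + 3 - 2) + 1) → ℕ :=
    fun t p => if t = 0 then dmA M p.val else 4*M+4 - dmA M p.val with hx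
  have hval : ∀ p : Fin (2 * (m' + 3 - 2) + 1), (p : ℕ) ≤ 2*M := by
    intro p; have := p.isLt; omega
  set L := degMagicLabels (m' + 3) 2 x (2*M+2) with hL
  have hinj : Function.Injective L := by
    intro a b hab
    rcases a with ⟨t, p⟩ | u₁ <;> rcases b with ⟨s, q⟩ | u₂ <;>
      simp only [hL, degMagicLabels, Sum.elim_inl, Sum.elim_inr, hx] at hab
    · fin_cases t <;> fin_cases s <;>
        simp only [Fin.mk_one, Fin.zero_eta, one_ne_zero, reduceIte] at hab
      · have := dmA_inj M hm (hval p) (hval q)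
        have hpq : (p:ℕ) = q := this.1 hab
        simp [Fin.ext_iff, hpq]
      · exfalso
        have h1 := dmA_bounds M hm (hval p)
        have h2 := dmA_bounds M hm (hval q)
        have := (dmA_inj M hm (hval p) (hval q)).2
        omega
      · exfalso
        have h1 := dmA_bounds M hm (hval p)
        have h2 := dmA_bounds M hm (hval q)
        have := (dmA_inj M hm (hval p) (hval q)).2
        omega
      · have h1 := dmA_bounds M hm (hval p)
        have h2 := dmA_bounds M hm (hval q)
        have := dmA_inj M hm (hval p) (hval q)
        have hpq : (p:ℕ) = q := this.1 (by omega)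
        simp [Fin.ext_iff, hpq]
    · exfalso
      have h1 := dmA_bounds M hm (hval p)
      fin_cases t <;>
        simp only [Fin.mk_one, Fin.zero_eta, one_ne_zero, reduceIte] at hab <;> omega
    · exfalso
      have h1 := dmA_bounds M hm (hval q)
      fin_cases s <;>
        simp only [Fin.mk_one, Fin.zero_eta, one_ne_zero, reduceIte] at hab <;> omega
    · rfl
  refine ⟨x, 2*M+2, 6*M+6, hinj, ?_, ?_, ?_⟩
  · -- range
    have hmem : ∀ a, L a ∈ Finset.Icc 1 (4*M+3) := by
      intro a
      rcases a with ⟨t, p⟩ | u₁ <;>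
        simp only [hL, degMagicLabels, Sum.elim_inl, Sum.elim_inr, hx, Finset.mem_Icc]
      · have h1 := dmA_bounds M hm (hval p)
        fin_cases t <;>
          simp only [Fin.mk_one, Fin.zero_eta, one_ne_zero, reduceIte] <;> omega
      · omega
    have hcard : (Finset.univ.image L).card = 4*M+3 := by
      rw [Finset.card_image_of_injective _ hinj, Finset.card_univ]
      simp only [Fintype.card_sum, Fintype.card_prod, Fintype.card_fin, Fintype.card_unit, hn2]
      omega
    have himg : Finset.univ.image L = Finset.Icc 1 (4*M+3) := by
      apply Finset.eq_of_subset_of_card_le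
      · intro v hv
        rcases Finset.mem_image.mp hv with ⟨a, _, rfl⟩
        exact hmem a
      · rw [hcard, Nat.card_Icc]; omega
    have hpow : (2:ℕ)^2 * (m' + 3 - 2) + 2 + 1 = 4*M+3 := by
      rw [hn2]; norm_num
    rw [hpow]
    rw [← Finset.coe_Icc, ← himg]
    ext v
    simp [hL]
  · -- edge sums
    intro t i hi
    simp only [Finset.mem_range, hn2] at hi
    have hcast : ∀ j : ℕ, j ≤ 2 → ((Fin.ofNat (2 * (m' + 3 - 2) + 1) (i * 2 + j) : Fin (2 * (m' + 3 - 2) + 1)) : ℕ) = i * 2 + j := by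
      intro j hj
      show (i * 2 + j) % (2 * (m' + 3 - 2) + 1) = i * 2 + j
      apply Nat.mod_eq_of_lt
      show i * 2 + j < 2 * M + 1
      omega
    have htriple := dmA_triple M hi
    have b0 := dmA_bounds M hm (p := i*2) (by omega)
    have b1 := dmA_bounds M hm (p := i*2+1) (by omega)
    have b2 := dmA_bounds M hm (p := i*2+2) (by omega)
    fin_cases t <;>
      simp only [hx, Finset.sum_range_succ, Finset.sum_range_zero, Fin.mk_one, Fin.zero_eta,
        one_ne_zero, reduceIte, zero_add] <;>
      rw [hcast 0 (by omega), hcast 1 (by omega), hcast 2 (by omega)] <;>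
      simp only [Nat.add_zero] <;>
      omega
  · -- radial sums
    intro p
    have hp : (p : ℕ) ≤ 2*M := hval p
    have h1 := dmA_bounds M hm hp
    rw [Fin.sum_univ_two]
    simp only [hx, Fin.mk_one, Fin.zero_eta, one_ne_zero, reduceIte]
    omega
end
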